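/- If b c s t = 0 for the 5-by-5 matrix A = [[0,0,1,0,0],[0,0,0,b,tc],[0,0,0,c,−tb],[0,0,0,0,s],[0,0,0,0,0]] (constraints b,c,s,t ≥ 0, s²+t²=1, b²+c²=1), then the numerical range W(A) is the closed circular disk centered at 0 of radius (1/2)√((3 + √(5 − 4(b² + c²t²)))/2). -/

import Mathlib

set_option maxRecDepth 8000
set_option maxHeartbeats 1000000
set_option linter.unusedVariables false
open scoped ComplexConjugate
open Finset


/-- The numerical range of a matrix: `{⟨Ax, x⟩ : ‖x‖ = 1}` (in Mathlib's convention,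
`⟨Ax, x⟩ = inner x (Ax)` since `inner` is conjugate-linear in its first argument). -/
noncomputable def numRange {n : ℕ} (A : Matrix (Fin n) (Fin n) ℂ) : Set ℂ :=
  {z | ∃ x : EuclideanSpace ℂ (Fin n), ‖x‖ = 1 ∧ (inner ℂ x (Matrix.toEuclideanLin A x) : ℂ) = z}

private noncomputable def Qf (A : Matrix (Fin 5) (Fin 5) ℂ) (x : Fin 5 → ℂ) : ℂ :=
  ∑ i, conj (x i) * ∑ j, A i j * x j

private lemma numRange_mem_iff {A : Matrix (Fin 5) (Fin 5) ℂ} {z : ℂ} :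
    z ∈ numRange A ↔ ∃ x : Fin 5 → ℂ,
      (∑ i, Complex.normSq (x i)) = 1 ∧ Qf A x = z := by
  constructor
  · rintro ⟨x, hx, hz⟩
    refine ⟨fun i => x i, ?_, ?_⟩
    · have h := hx
      rw [EuclideanSpace.norm_eq] at h
      have h2 : ∑ i, ‖x i‖ ^ 2 = 1 := by
        have hnn : 0 ≤ ∑ i, ‖x i‖ ^ 2 := Finset.sum_nonneg fun i _ => sq_nonneg _
        nlinarith [Real.sq_sqrt hnn, h]
      simp only [Complex.normSq_eq_norm_sq]
      exact h2
    · rw [← hz]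
      rw [PiLp.inner_apply]
      refine Finset.sum_congr rfl fun i _ => ?_
      simp [Qf, Matrix.toEuclideanLin_apply, Matrix.mulVec, dotProduct,
        RCLike.inner_apply, mul_comm]
  · rintro ⟨x, hx, hz⟩
    refine ⟨(WithLp.equiv 2 _).symm x, ?_, ?_⟩
    · rw [EuclideanSpace.norm_eq]
      have : ∑ i, ‖x i‖ ^ 2 = 1 := by
        simp only [Complex.normSq_eq_norm_sq] at hx
        exact hx
      rw [show (∑ i, ‖((WithLp.equiv 2 _).symm x : EuclideanSpace ℂ (Fin 5)) i‖ ^ 2)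
          = ∑ i, ‖x i‖ ^ 2 from rfl, this, Real.sqrt_one]
    · rw [← hz, PiLp.inner_apply]
      refine Finset.sum_congr rfl fun i _ => ?_
      simp [Qf, Matrix.toEuclideanLin_apply, Matrix.mulVec, dotProduct,
        RCLike.inner_apply, mul_comm]

private lemma Qf_smul (A : Matrix (Fin 5) (Fin 5) ℂ) (d : ℂ) (x : Fin 5 → ℂ) :
    Qf A (fun i => d * x i) = conj d * d * Qf A x := by
  simp only [Qf, Fin.sum_univ_five, map_mul]
  ring

private lemma Qf_normSq_smul (k : Fin 5 → ℕ) (d : ℂ) (x : Fin 5 → ℂ)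
    (hd : Complex.normSq d = 1) :
    ∑ i, Complex.normSq (d ^ (k i) * x i) = ∑ i, Complex.normSq (x i) := by
  simp [Complex.normSq_mul, map_pow, hd]

private lemma glue (A : Matrix (Fin 5) (Fin 5) ℂ) (R : ℝ) (hR : 0 < R)
    (hA00 : A 0 0 = 0)
    (w : Fin 5 → ℕ)
    (hphase : ∀ u : ℂ, Complex.normSq u = 1 → ∀ x : Fin 5 → ℂ,
      Qf A (fun i => u ^ w i * x i) = u * Qf A x)
    (hub : ∀ x : Fin 5 → ℂ, (Qf A x).re ≤ R * ∑ i, Complex.normSq (x i))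
    (v : Fin 5 → ℂ) (hv0 : (v 0).im = 0) (hv0' : 0 ≤ (v 0).re) (hvne : v ≠ 0)
    (hQv : Qf A v = ((R * ∑ i, Complex.normSq (v i) : ℝ) : ℂ)) :
    {z | ∃ x : Fin 5 → ℂ, (∑ i, Complex.normSq (x i)) = 1 ∧ Qf A x = z}
      = Metric.closedBall (0 : ℂ) R := by
  ext z
  simp only [Set.mem_setOf_eq, Metric.mem_closedBall, dist_zero_right]
  constructor
  · rintro ⟨x, hx1, rfl⟩
    by_cases hq : Qf A x = 0
    · simp [hq]; exact hR.le
    · set u : ℂ := conj (Qf A x) * ((‖Qf A x‖ : ℝ) : ℂ)⁻¹ with hu_def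
      have habs : ‖Qf A x‖ ≠ 0 := by simpa using hq
      have hu : Complex.normSq u = 1 := by
        simp only [hu_def, map_mul, Complex.normSq_conj, map_inv₀, Complex.normSq_ofReal]
        rw [Complex.normSq_eq_norm_sq]
        field_simp
      have huz : u * Qf A x = ((‖Qf A x‖ : ℝ) : ℂ) := by
        rw [hu_def]
        have hcs : conj (Qf A x) * Qf A x = ((‖Qf A x‖ ^ 2 : ℝ) : ℂ) := by
          rw [← Complex.normSq_eq_norm_sq, Complex.normSq_eq_conj_mul_self]
        have habsC : ((‖Qf A x‖ : ℝ) : ℂ) ≠ 0 := Complex.ofReal_ne_zero.mpr habs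
        calc conj (Qf A x) * ((‖Qf A x‖ : ℝ) : ℂ)⁻¹ * Qf A x
            = (conj (Qf A x) * Qf A x) * ((‖Qf A x‖ : ℝ) : ℂ)⁻¹ := by ring
          _ = ((‖Qf A x‖ ^ 2 : ℝ) : ℂ) * ((‖Qf A x‖ : ℝ) : ℂ)⁻¹ := by
              rw [hcs]
          _ = ((‖Qf A x‖ : ℝ) : ℂ) := by
              push_cast
              field_simp
      have h1 := hphase u hu x
      have h2 := hub (fun i => u ^ w i * x i)
      rw [h1, huz] at h2
      rw [Qf_normSq_smul w u x hu, hx1, mul_one] at h2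
      simpa using h2
  · intro hz
    set e1 : Fin 5 → ℂ := fun i => if i = 0 then 1 else 0 with he1
    set p : ℝ → (Fin 5 → ℂ) := fun τ i => ((1 - τ : ℝ) : ℂ) * e1 i + ((τ : ℝ) : ℂ) * v i with hp
    have hQe1 : Qf A e1 = 0 := by
      simp [Qf, he1, Fin.sum_univ_five, hA00]
    set nn : ℝ → ℝ := fun τ => ∑ i, Complex.normSq (p τ i) with hnn
    have hpcont : ∀ i, Continuous fun τ => p τ i := by
      intro i
      fun_prop
    have hQcont : Continuous fun τ => Qf A (p τ) := by
      simp only [Qf]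
      apply continuous_finset_sum
      intro i _
      apply Continuous.mul (Complex.continuous_conj.comp (hpcont i))
      apply continuous_finset_sum
      intro j _
      exact continuous_const.mul (hpcont j)
    have hncont : Continuous nn := by
      simp only [hnn]
      exact continuous_finset_sum _ fun i _ => Complex.continuous_normSq.comp (hpcont i)
    have hppos : ∀ τ ∈ Set.Icc (0:ℝ) 1, p τ ≠ 0 := by
      intro τ hτ hcon
      rcases eq_or_lt_of_le hτ.2 with h1 | h1
      · subst h1
        apply hvne
        funext i
        have := congrFun hcon i
        simpa [hp, he1] using this
      · have := congrFun hcon 0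
        simp only [hp, he1, if_pos rfl, mul_one] at this
        have hre := congrArg Complex.re this
        simp [Complex.add_re, Complex.ofReal_re, Complex.mul_re] at hre
        nlinarith [hτ.1, mul_nonneg hτ.1 hv0']
    have hnpos : ∀ τ ∈ Set.Icc (0:ℝ) 1, 0 < nn τ := by
      intro τ hτ
      refine Finset.sum_pos' (fun i _ => Complex.normSq_nonneg _) ?_
      have : ∃ i, p τ i ≠ 0 := by
        by_contra hcon
        push_neg at hcon
        exact hppos τ hτ (funext hcon)
      obtain ⟨i, hi⟩ := this
      exact ⟨i, Finset.mem_univ i, Complex.normSq_pos.mpr hi⟩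
    set h : ℝ → ℝ := fun τ => ‖Qf A (p τ)‖ / nn τ with hh
    have hcont : ContinuousOn h (Set.Icc 0 1) := by
      apply ContinuousOn.div
        (Continuous.continuousOn (continuous_norm.comp hQcont)) hncont.continuousOn
      intro τ hτ
      exact (hnpos τ hτ).ne'
    have hp0 : p 0 = e1 := by funext i; simp [hp]
    have hp1 : p 1 = v := by funext i; simp [hp]
    have hh0 : h 0 = 0 := by simp [hh, hp0, hQe1]
    have hh1 : h 1 = R := by
      have hn1 : nn 1 = ∑ i, Complex.normSq (v i) := by
        simp only [hnn, hp1]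
      have hsnn : (0:ℝ) ≤ ∑ i, Complex.normSq (v i) :=
        Finset.sum_nonneg fun i _ => Complex.normSq_nonneg _
      simp only [hh, hp1, hQv, hn1, Complex.norm_real, Real.norm_eq_abs]
      rw [abs_of_nonneg (mul_nonneg hR.le hsnn)]
      have : (0:ℝ) < ∑ i, Complex.normSq (v i) := by rw [← hn1]; exact hnpos 1 (by norm_num)
      field_simp
    have hmem : ‖z‖ ∈ Set.Icc (h 0) (h 1) := by
      rw [hh0, hh1]
      exact ⟨norm_nonneg z, hz⟩
    obtain ⟨τ0, hτ0, hτ0v⟩ := intermediate_value_Icc (by norm_num : (0:ℝ) ≤ 1) hcont hmem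
    set N := nn τ0 with hN
    have hNpos : 0 < N := hnpos τ0 hτ0
    set d : ℂ := (((Real.sqrt N)⁻¹ : ℝ) : ℂ) with hd
    set x0 : Fin 5 → ℂ := fun i => d * p τ0 i with hx0
    have hsum0 : ∑ i, Complex.normSq (x0 i) = 1 := by
      simp only [hx0, Complex.normSq_mul, hd, Complex.normSq_ofReal]
      rw [← Finset.mul_sum]
      rw [show (∑ i, Complex.normSq (p τ0 i)) = N from rfl]
      rw [show ((Real.sqrt N)⁻¹ * (Real.sqrt N)⁻¹ : ℝ) = ((Real.sqrt N)*(Real.sqrt N))⁻¹ by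
        rw [mul_inv]]
      rw [Real.mul_self_sqrt hNpos.le]
      field_simp
    have hQx0 : Qf A x0 = ((N⁻¹ : ℝ) : ℂ) * Qf A (p τ0) := by
      rw [hx0, Qf_smul]
      congr 1
      rw [hd, Complex.conj_ofReal, ← Complex.ofReal_mul]
      congr 1
      rw [← mul_inv, Real.mul_self_sqrt hNpos.le]
    have habsx0 : ‖Qf A x0‖ = ‖z‖ := by
      rw [hQx0, norm_mul, Complex.norm_real, Real.norm_eq_abs, abs_of_nonneg (inv_nonneg.mpr hNpos.le)]
      rw [← hτ0v]
      show N⁻¹ * ‖Qf A (p τ0)‖ = ‖Qf A (p τ0)‖ / nn τ0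
      rw [← hN, inv_mul_eq_div]
    by_cases hz0 : z = 0
    · refine ⟨x0, hsum0, ?_⟩
      rw [hz0]
      have : ‖Qf A x0‖ = 0 := by rw [habsx0, hz0, norm_zero]
      exact norm_eq_zero.mp this
    · have hQx0ne : Qf A x0 ≠ 0 := by
        intro hcon
        apply hz0
        rw [hcon, norm_zero] at habsx0
        exact norm_eq_zero.mp habsx0.symm
      set u : ℂ := z * (Qf A x0)⁻¹ with hu_def
      have huabs : ‖u‖ = 1 := by
        rw [hu_def, norm_mul, norm_inv, habsx0]
        have : ‖z‖ ≠ 0 := by simpa using hz0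
        field_simp
      have hu : Complex.normSq u = 1 := by
        rw [Complex.normSq_eq_norm_sq, huabs]; norm_num
      refine ⟨fun i => u ^ w i * x0 i, ?_, ?_⟩
      · rw [Qf_normSq_smul w u x0 hu, hsum0]
      · rw [hphase u hu x0, hu_def]
        field_simp

private lemma hub_helper (μ S re : ℝ) (hμ : 0 < μ) (h : 2*μ*re ≤ μ^2*S) : re ≤ 1/2*μ*S := by
  nlinarith

private lemma bound_t0 (b c μ u1 u2 u3 u4 u5 : ℝ) (hbc : b^2 + c^2 = 1)
    (hμ2 : 2 ≤ μ^2) (hμ4 : μ^4 = 3*μ^2 - 1 - b^2) :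
    2*μ*(u1*u3 + b*u2*u4 + c*u3*u4 + u4*u5) ≤ μ^2*(u1^2+u2^2+u3^2+u4^2+u5^2) := by
  have h1 : (0:ℝ) < μ^2 - 1 := by nlinarith
  have hΔ : (μ^2-1)*(μ^2-1-b^2) - μ^2*c^2 = 0 := by linear_combination hμ4 - μ^2 * hbc
  have key : (μ^2-1)*(μ^2*(u1^2+u2^2+u3^2+u4^2+u5^2)
        - 2*μ*(u1*u3 + b*u2*u4 + c*u3*u4 + u4*u5))
      = (μ^2-1)*((μ*u1-u3)^2 + (μ*u2-b*u4)^2 + (μ*u5-u4)^2)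
        + ((μ^2-1)*u3 - μ*c*u4)^2 + ((μ^2-1)*(μ^2-1-b^2) - μ^2*c^2)*u4^2 := by ring
  rw [hΔ] at key
  have hN : 0 ≤ (μ^2-1)*(μ^2*(u1^2+u2^2+u3^2+u4^2+u5^2)
      - 2*μ*(u1*u3 + b*u2*u4 + c*u3*u4 + u4*u5)) := by
    rw [key]
    nlinarith [mul_nonneg h1.le (sq_nonneg (μ*u1-u3)), mul_nonneg h1.le (sq_nonneg (μ*u2-b*u4)),
      mul_nonneg h1.le (sq_nonneg (μ*u5-u4)), sq_nonneg ((μ^2-1)*u3 - μ*c*u4)]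
  nlinarith [hN, h1]

private lemma bound_s0 (b c μ u1 u2 u3 u4 u5 : ℝ) (hbc : b^2 + c^2 = 1) (hμ : μ^2 = 2) :
    2*μ*(u1*u3 + b*u2*u4 + c*u2*u5 + c*u3*u4 - b*u3*u5) ≤ μ^2*(u1^2+u2^2+u3^2+u4^2+u5^2) := by
  nlinarith [sq_nonneg (μ*u3 - u1 - (c*u4 - b*u5)), sq_nonneg (u1 - (c*u4 - b*u5)),
    sq_nonneg (μ*u2 - (b*u4 + c*u5)), sq_nonneg (b*u4 + c*u5)]

private lemma bound_c0 (s t μ u1 u2 u3 u4 u5 : ℝ) (hst : s^2 + t^2 = 1) (hμ : μ^2 = 2) :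
    2*μ*(u1*u3 + u2*u4 - t*u3*u5 + s*u4*u5) ≤ μ^2*(u1^2+u2^2+u3^2+u4^2+u5^2) := by
  have key : μ^2*(u1^2+u2^2+u3^2+u4^2+u5^2) - 2*μ*(u1*u3 + u2*u4 - t*u3*u5 + s*u4*u5)
      = (μ*u1-u3)^2 + (μ*u2-u4)^2 + (u3+μ*t*u5)^2 + (u4-μ*s*u5)^2 := by
    linear_combination (u3^2+u4^2)*hμ - μ^2*u5^2*hst
  nlinarith [key, sq_nonneg (μ*u1-u3), sq_nonneg (μ*u2-u4), sq_nonneg (u3+μ*t*u5),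
    sq_nonneg (u4-μ*s*u5)]

private lemma bound_b0 (s t μ u1 u2 u3 u4 u5 : ℝ) (hst : s^2 + t^2 = 1)
    (hμ2 : 2 ≤ μ^2) (hμ4 : μ^4 = 3*μ^2 - 1 - t^2) :
    2*μ*(u1*u3 + t*u2*u5 + u3*u4 + s*u4*u5) ≤ μ^2*(u1^2+u2^2+u3^2+u4^2+u5^2) := by
  have h1 : (0:ℝ) < μ^2 - 1 := by nlinarith
  rcases eq_or_lt_of_le hμ2 with heq | hlt
  · have ht2 : t^2 = 1 := by nlinarith
    have hs : s = 0 := by nlinarith [sq_nonneg s]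
    rw [hs]
    nlinarith [sq_nonneg (μ*u1-u3), sq_nonneg (μ*u2-t*u5), sq_nonneg (u3-μ*u4), sq_nonneg u5]
  · have h3 : (0:ℝ) < μ^2 - 2 := by linarith
    have hzero : (μ^2-2)*(μ^2-t^2) - s^2*(μ^2-1) = 0 := by
      linear_combination hμ4 + (1-μ^2)*hst
    have key2 : (μ^2-2)*(μ^2*(μ^2-2)*u4^2 - 2*μ*s*(μ^2-1)*u4*u5 + (μ^2-t^2)*(μ^2-1)*u5^2)
        = (μ*(μ^2-2)*u4 - s*(μ^2-1)*u5)^2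
          + (μ^2-1)*((μ^2-2)*(μ^2-t^2) - s^2*(μ^2-1))*u5^2 := by ring
    rw [hzero, mul_zero, zero_mul, add_zero] at key2
    have hB : 0 ≤ μ^2*(μ^2-2)*u4^2 - 2*μ*s*(μ^2-1)*u4*u5 + (μ^2-t^2)*(μ^2-1)*u5^2 := by
      nlinarith [key2, sq_nonneg (μ*(μ^2-2)*u4 - s*(μ^2-1)*u5), h3]
    have key : (μ^2-1)*(μ^2*(u1^2+u2^2+u3^2+u4^2+u5^2)
          - 2*μ*(u1*u3 + t*u2*u5 + u3*u4 + s*u4*u5))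
        = (μ^2-1)*((μ*u1-u3)^2 + (μ*u2-t*u5)^2) + ((μ^2-1)*u3 - μ*u4)^2
          + (μ^2*(μ^2-2)*u4^2 - 2*μ*s*(μ^2-1)*u4*u5 + (μ^2-t^2)*(μ^2-1)*u5^2) := by ring
    nlinarith [key, hB, h1, mul_nonneg h1.le (sq_nonneg (μ*u1-u3)),
      mul_nonneg h1.le (sq_nonneg (μ*u2-t*u5)), sq_nonneg ((μ^2-1)*u3 - μ*u4)]

theorem numRange_5x5_circular (b c s t : ℝ)
    (hb : 0 ≤ b) (hc : 0 ≤ c) (hs : 0 ≤ s) (ht : 0 ≤ t)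
    (hst : s ^ 2 + t ^ 2 = 1) (hbc : b ^ 2 + c ^ 2 = 1)
    (h0 : b * c * s * t = 0) :
    let A : Matrix (Fin 5) (Fin 5) ℂ :=
      !![0, 0, 1, 0, 0;
         0, 0, 0, (b : ℂ), ((t * c : ℝ) : ℂ);
         0, 0, 0, (c : ℂ), ((-(t * b) : ℝ) : ℂ);
         0, 0, 0, 0, (s : ℂ);
         0, 0, 0, 0, 0]
    numRange A = Metric.closedBall (0 : ℂ)
      (1 / 2 * Real.sqrt ((3 + Real.sqrt (5 - 4 * (b ^ 2 + c ^ 2 * t ^ 2))) / 2)) := by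
  intro A
  have hA : A = !![0, 0, 1, 0, 0;
         0, 0, 0, (b : ℂ), ((t * c : ℝ) : ℂ);
         0, 0, 0, (c : ℂ), ((-(t * b) : ℝ) : ℂ);
         0, 0, 0, 0, (s : ℂ);
         0, 0, 0, 0, 0] := rfl
  have ht2le : t ^ 2 ≤ 1 := by nlinarith [sq_nonneg s]
  set m := b ^ 2 + c ^ 2 * t ^ 2 with hm
  have hm0 : 0 ≤ m := by positivity
  have hm1 : m ≤ 1 := by nlinarith [sq_nonneg c]
  set α := Real.sqrt (5 - 4 * m) with hαdef
  have hα2 : α ^ 2 = 5 - 4 * m := Real.sq_sqrt (by linarith)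
  have hα0 : 0 ≤ α := Real.sqrt_nonneg _
  have hα1 : 1 ≤ α := by nlinarith
  set μ := Real.sqrt ((3 + α) / 2) with hμdef
  have hμsq : μ ^ 2 = (3 + α) / 2 := Real.sq_sqrt (by linarith)
  have hμ2 : 2 ≤ μ ^ 2 := by rw [hμsq]; linarith
  have hμpos : 0 < μ := Real.sqrt_pos.mpr (by linarith)
  have hμ4 : μ ^ 4 = 3 * μ ^ 2 - 1 - m := by
    linear_combination (μ ^ 2 + (3 + α) / 2 - 3) * hμsq + (1 / 4) * hα2
  have hA00 : A 0 0 = 0 := by rw [hA]; simp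
  have hQA : ∀ x : Fin 5 → ℂ, Qf A x
      = conj (x 0) * x 2 + conj (x 1) * ((b:ℂ) * x 3 + ((t*c:ℝ):ℂ) * x 4)
        + conj (x 2) * ((c:ℂ) * x 3 + ((-(t*b):ℝ):ℂ) * x 4) + conj (x 3) * ((s:ℂ) * x 4) := by
    intro x
    rw [hA]
    simp [Qf, Fin.sum_univ_five, Matrix.vecHead, Matrix.vecTail]
  have hmain : numRange A
      = {z | ∃ x : Fin 5 → ℂ, (∑ i, Complex.normSq (x i)) = 1 ∧ Qf A x = z} :=
    Set.ext fun z => numRange_mem_iff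
  rw [hmain]
  have hbcst : b = 0 ∨ c = 0 ∨ s = 0 ∨ t = 0 := by
    rcases mul_eq_zero.mp h0 with h | h
    · rcases mul_eq_zero.mp h with h | h
      · rcases mul_eq_zero.mp h with h | h
        · exact Or.inl h
        · exact Or.inr (Or.inl h)
      · exact Or.inr (Or.inr (Or.inl h))
    · exact Or.inr (Or.inr (Or.inr h))
  have hRpos : 0 < 1 / 2 * μ := by positivity
  rcases hbcst with hb0 | hc0 | hs0 | ht0
  · -- CASE b = 0
    subst hb0
    have hc1 : c = 1 := by nlinarith
    subst hc1
    have hμ4' : μ ^ 4 = 3 * μ ^ 2 - 1 - t ^ 2 := by rw [hμ4, hm]; ring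
    have hkey : (μ^2-2)*(μ^2-t^2) - s^2*(μ^2-1) = 0 := by
      linear_combination hμ4' + (1-μ^2)*hst
    refine glue A (1/2*μ) hRpos hA00 ![0,2,1,2,3] ?_ ?_
      (fun i => ((![μ^2-t^2, s*t*(μ^2-1), μ*(μ^2-t^2), (μ^2-1)*(μ^2-t^2), s*μ*(μ^2-1)] i : ℝ) : ℂ)) ?_ ?_ ?_ ?_
    · -- phase
      intro u hu x
      have huc : conj u * u = 1 := by rw [mul_comm, Complex.mul_conj, hu, Complex.ofReal_one]
      have hune : u ≠ 0 := by
        intro h; rw [h] at huc; simp at huc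
      have hcu : conj u = u⁻¹ := eq_inv_of_mul_eq_one_left huc
      rw [hQA, hQA]
      simp only [Matrix.cons_val_zero, Matrix.cons_val_one, Matrix.head_cons,
        Matrix.cons_val_two, Matrix.tail_cons, Matrix.cons_val_three, Matrix.cons_val_four]
      simp only [map_mul, map_pow, hcu]
      push_cast
      field_simp
      ring
    · -- upper bound
      intro x
      have h1 := bound_b0 s t μ (x 0).re (x 1).re (x 2).re (x 3).re (x 4).re hst hμ2 hμ4'
      have h2 := bound_b0 s t μ (x 0).im (x 1).im (x 2).im (x 3).im (x 4).im hst hμ2 hμ4'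
      apply hub_helper μ _ _ hμpos
      have hre : (Qf A x).re
          = ((x 0).re*(x 2).re + (x 0).im*(x 2).im)
            + t*((x 1).re*(x 4).re + (x 1).im*(x 4).im)
            + ((x 2).re*(x 3).re + (x 2).im*(x 3).im)
            + s*((x 3).re*(x 4).re + (x 3).im*(x 4).im) := by
        rw [hQA x]
        simp [Complex.add_re, Complex.mul_re, Complex.conj_re, Complex.conj_im,
          Complex.ofReal_re, Complex.ofReal_im]
        ring
      have hS : ∑ i, Complex.normSq (x i)
          = ((x 0).re^2 + (x 0).im^2) + ((x 1).re^2 + (x 1).im^2) + ((x 2).re^2 + (x 2).im^2)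
            + ((x 3).re^2 + (x 3).im^2) + ((x 4).re^2 + (x 4).im^2) := by
        simp [Fin.sum_univ_five, Complex.normSq_apply, sq]
      rw [hre, hS]
      linarith [h1, h2]
    · exact Complex.ofReal_im _
    · have h00 : ((fun i => ((![μ^2-t^2, s*t*(μ^2-1), μ*(μ^2-t^2), (μ^2-1)*(μ^2-t^2),
          s*μ*(μ^2-1)] i : ℝ) : ℂ)) 0).re = μ^2-t^2 := Complex.ofReal_re _
      rw [h00]
      nlinarith
    · intro hcon
      have h4 := congrFun hcon 0
      simp only [Matrix.cons_val_zero, Pi.zero_apply, Complex.ofReal_eq_zero] at h4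
      nlinarith
    · -- hQv
      rw [hQA]
      have hSv : ∑ i, Complex.normSq
          ((fun i => ((![μ^2-t^2, s*t*(μ^2-1), μ*(μ^2-t^2), (μ^2-1)*(μ^2-t^2),
            s*μ*(μ^2-1)] i : ℝ) : ℂ)) i)
          = (μ^2-t^2)^2 + (s*t*(μ^2-1))^2 + (μ*(μ^2-t^2))^2 + ((μ^2-1)*(μ^2-t^2))^2
            + (s*μ*(μ^2-1))^2 := by
        simp [Fin.sum_univ_five, Complex.normSq_ofReal]
        ring
      rw [hSv]
      simp only [Matrix.cons_val_zero, Matrix.cons_val_one, Matrix.head_cons,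
        Matrix.cons_val_two, Matrix.tail_cons, Matrix.cons_val_three, Matrix.cons_val_four,
        Complex.conj_ofReal]
      have key : (μ^2-t^2)*(μ*(μ^2-t^2))
          + (s*t*(μ^2-1))*((0:ℝ)*((μ^2-1)*(μ^2-t^2)) + (t*1)*(s*μ*(μ^2-1)))
          + (μ*(μ^2-t^2))*((1:ℝ)*((μ^2-1)*(μ^2-t^2)) + (-(t*0))*(s*μ*(μ^2-1)))
          + ((μ^2-1)*(μ^2-t^2))*(s*(s*μ*(μ^2-1)))
          = 1/2*μ*((μ^2-t^2)^2 + (s*t*(μ^2-1))^2 + (μ*(μ^2-t^2))^2 + ((μ^2-1)*(μ^2-t^2))^2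
            + (s*μ*(μ^2-1))^2) := by
        linear_combination (-(μ*(μ^2-1)*(μ^2-t^2))/2) * hkey
      have keyC := congrArg (Complex.ofReal) key
      push_cast at keyC ⊢
      linear_combination keyC
  · -- CASE c = 0
    subst hc0
    have hb1 : b = 1 := by nlinarith
    subst hb1
    have hμ22 : μ ^ 2 = 2 := by
      have hfac : (μ^2-1)*(μ^2-2) = 0 := by linear_combination hμ4 + hm
      rcases mul_eq_zero.mp hfac with h | h
      · linarith
      · linarith
    refine glue A (1/2*μ) hRpos hA00 ![0,0,1,1,2] ?_ ?_
      (fun i => ((![t, -s, μ*t, -(μ*s), -1] i : ℝ) : ℂ)) ?_ ?_ ?_ ?_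
    · -- phase
      intro u hu x
      have huc : conj u * u = 1 := by rw [mul_comm, Complex.mul_conj, hu, Complex.ofReal_one]
      have hune : u ≠ 0 := by
        intro h; rw [h] at huc; simp at huc
      have hcu : conj u = u⁻¹ := eq_inv_of_mul_eq_one_left huc
      rw [hQA, hQA]
      simp only [Matrix.cons_val_zero, Matrix.cons_val_one, Matrix.head_cons,
        Matrix.cons_val_two, Matrix.tail_cons, Matrix.cons_val_three, Matrix.cons_val_four]
      simp only [map_mul, map_pow, hcu]
      push_cast
      field_simp
      ring
    · -- upper bound
      intro x
      have h1 := bound_c0 s t μ (x 0).re (x 1).re (x 2).re (x 3).re (x 4).re hst hμ22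
      have h2 := bound_c0 s t μ (x 0).im (x 1).im (x 2).im (x 3).im (x 4).im hst hμ22
      apply hub_helper μ _ _ hμpos
      have hre : (Qf A x).re
          = ((x 0).re*(x 2).re + (x 0).im*(x 2).im)
            + ((x 1).re*(x 3).re + (x 1).im*(x 3).im)
            - t*((x 2).re*(x 4).re + (x 2).im*(x 4).im)
            + s*((x 3).re*(x 4).re + (x 3).im*(x 4).im) := by
        rw [hQA x]
        simp [Complex.add_re, Complex.mul_re, Complex.conj_re, Complex.conj_im,
          Complex.ofReal_re, Complex.ofReal_im]
        ring
      have hS : ∑ i, Complex.normSq (x i)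
          = ((x 0).re^2 + (x 0).im^2) + ((x 1).re^2 + (x 1).im^2) + ((x 2).re^2 + (x 2).im^2)
            + ((x 3).re^2 + (x 3).im^2) + ((x 4).re^2 + (x 4).im^2) := by
        simp [Fin.sum_univ_five, Complex.normSq_apply, sq]
      rw [hre, hS]
      linarith [h1, h2]
    · simp
    · have : ((fun i => ((![t, -s, μ*t, -(μ*s), -1] i : ℝ) : ℂ)) 0).re = t := by simp
      rw [this]
      exact ht
    · intro hcon
      have h4 := congrFun hcon 4
      simp only [Matrix.cons_val_four, Matrix.cons_val_zero, Matrix.cons_val_one,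
        Matrix.head_cons, Matrix.tail_cons, Pi.zero_apply, Complex.ofReal_eq_zero] at h4
      norm_num at h4
    · -- hQv
      rw [hQA]
      have hSv : ∑ i, Complex.normSq
          ((fun i => ((![t, -s, μ*t, -(μ*s), -1] i : ℝ) : ℂ)) i)
          = t^2 + s^2 + (μ*t)^2 + (μ*s)^2 + 1 := by
        simp [Fin.sum_univ_five, Complex.normSq_ofReal]
        ring
      rw [hSv]
      simp only [Matrix.cons_val_zero, Matrix.cons_val_one, Matrix.head_cons,
        Matrix.cons_val_two, Matrix.tail_cons, Matrix.cons_val_three, Matrix.cons_val_four,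
        Complex.conj_ofReal]
      have key : t*(μ*t) + (-s)*((1:ℝ)*(-(μ*s)) + (t*0)*(-1))
          + (μ*t)*((0:ℝ)*(-(μ*s)) + (-(t*1))*(-1)) + (-(μ*s))*(s*(-1))
          = 1/2*μ*(t^2 + s^2 + (μ*t)^2 + (μ*s)^2 + 1) := by
        linear_combination (μ/2)*(3-μ^2)*hst - (μ/2)*hμ22
      have keyC := congrArg (Complex.ofReal) key
      push_cast at keyC ⊢
      linear_combination keyC
  · -- CASE s = 0
    subst hs0
    have ht1 : t = 1 := by nlinarith
    subst ht1
    have hμ22 : μ ^ 2 = 2 := by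
      have hfac : (μ^2-1)*(μ^2-2) = 0 := by linear_combination hμ4 + hm - hbc
      rcases mul_eq_zero.mp hfac with h | h
      · linarith
      · linarith
    refine glue A (1/2*μ) hRpos hA00 ![0,1,1,2,2] ?_ ?_
      (fun i => ((![1, 0, μ, c, -b] i : ℝ) : ℂ)) ?_ ?_ ?_ ?_
    · -- phase
      intro u hu x
      have huc : conj u * u = 1 := by rw [mul_comm, Complex.mul_conj, hu, Complex.ofReal_one]
      have hune : u ≠ 0 := by
        intro h; rw [h] at huc; simp at huc
      have hcu : conj u = u⁻¹ := eq_inv_of_mul_eq_one_left huc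
      rw [hQA, hQA]
      simp only [Matrix.cons_val_zero, Matrix.cons_val_one, Matrix.head_cons,
        Matrix.cons_val_two, Matrix.tail_cons, Matrix.cons_val_three, Matrix.cons_val_four]
      simp only [map_mul, map_pow, hcu]
      push_cast
      field_simp
      ring
    · -- upper bound
      intro x
      have h1 := bound_s0 b c μ (x 0).re (x 1).re (x 2).re (x 3).re (x 4).re hbc hμ22
      have h2 := bound_s0 b c μ (x 0).im (x 1).im (x 2).im (x 3).im (x 4).im hbc hμ22
      apply hub_helper μ _ _ hμpos
      have hre : (Qf A x).re
          = ((x 0).re*(x 2).re + (x 0).im*(x 2).im)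
            + b*((x 1).re*(x 3).re + (x 1).im*(x 3).im)
            + c*((x 1).re*(x 4).re + (x 1).im*(x 4).im)
            + c*((x 2).re*(x 3).re + (x 2).im*(x 3).im)
            - b*((x 2).re*(x 4).re + (x 2).im*(x 4).im) := by
        rw [hQA x]
        simp [Complex.add_re, Complex.mul_re, Complex.conj_re, Complex.conj_im,
          Complex.ofReal_re, Complex.ofReal_im]
        ring
      have hS : ∑ i, Complex.normSq (x i)
          = ((x 0).re^2 + (x 0).im^2) + ((x 1).re^2 + (x 1).im^2) + ((x 2).re^2 + (x 2).im^2)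
            + ((x 3).re^2 + (x 3).im^2) + ((x 4).re^2 + (x 4).im^2) := by
        simp [Fin.sum_univ_five, Complex.normSq_apply, sq]
      rw [hre, hS]
      linarith [h1, h2]
    · simp
    · have : ((fun i => ((![1, 0, μ, c, -b] i : ℝ) : ℂ)) 0).re = 1 := by simp
      rw [this]
      norm_num
    · intro hcon
      have h4 := congrFun hcon 0
      simp only [Matrix.cons_val_zero, Pi.zero_apply, Complex.ofReal_eq_zero] at h4
      norm_num at h4
    · -- hQv
      rw [hQA]
      have hSv : ∑ i, Complex.normSq
          ((fun i => ((![1, 0, μ, c, -b] i : ℝ) : ℂ)) i)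
          = 1 + 0 + μ^2 + c^2 + b^2 := by
        simp [Fin.sum_univ_five, Complex.normSq_ofReal]
        ring
      rw [hSv]
      simp only [Matrix.cons_val_zero, Matrix.cons_val_one, Matrix.head_cons,
        Matrix.cons_val_two, Matrix.tail_cons, Matrix.cons_val_three, Matrix.cons_val_four,
        Complex.conj_ofReal]
      have key : (1:ℝ)*μ + (0:ℝ)*(b*c + (1*c)*(-b))
          + μ*(c*c + (-(1*b))*(-b)) + c*((0:ℝ)*(-b))
          = 1/2*μ*(1 + 0 + μ^2 + c^2 + b^2) := by
        linear_combination (μ/2)*hbc - (μ/2)*hμ22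
      have keyC := congrArg (Complex.ofReal) key
      push_cast at keyC ⊢
      linear_combination keyC
  -- CASE t = 0
  · subst ht0
    have hs1 : s = 1 := by nlinarith
    subst hs1
    have hmb : m = b ^ 2 := by rw [hm]; ring
    rw [hmb] at hμ4
    refine glue A (1/2*μ) hRpos hA00 ![0,1,1,2,3] ?_ ?_
      (fun i => ((![c*μ, b*(μ^2-1), c*μ^2, μ*(μ^2-1), μ^2-1] i : ℝ) : ℂ)) ?_ ?_ ?_ ?_
    · -- phase
      intro u hu x
      have huc : conj u * u = 1 := by rw [mul_comm, Complex.mul_conj, hu, Complex.ofReal_one]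
      have hune : u ≠ 0 := by
        intro h; rw [h] at huc; simp at huc
      have hcu : conj u = u⁻¹ := eq_inv_of_mul_eq_one_left huc
      rw [hQA, hQA]
      simp only [Matrix.cons_val_zero, Matrix.cons_val_one, Matrix.head_cons,
        Matrix.cons_val_two, Matrix.tail_cons, Matrix.cons_val_three, Matrix.cons_val_four]
      simp only [map_mul, map_pow, hcu]
      push_cast
      field_simp
      ring
    · -- upper bound
      intro x
      have h1 := bound_t0 b c μ (x 0).re (x 1).re (x 2).re (x 3).re (x 4).re hbc hμ2 hμ4
      have h2 := bound_t0 b c μ (x 0).im (x 1).im (x 2).im (x 3).im (x 4).im hbc hμ2 hμ4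
      apply hub_helper μ _ _ hμpos
      have hre : (Qf A x).re
          = ((x 0).re*(x 2).re + (x 0).im*(x 2).im)
            + b*((x 1).re*(x 3).re + (x 1).im*(x 3).im)
            + c*((x 2).re*(x 3).re + (x 2).im*(x 3).im)
            + ((x 3).re*(x 4).re + (x 3).im*(x 4).im) := by
        rw [hQA x]
        simp [Complex.add_re, Complex.mul_re, Complex.conj_re, Complex.conj_im,
          Complex.ofReal_re, Complex.ofReal_im]
        ring
      have hS : ∑ i, Complex.normSq (x i)
          = ((x 0).re^2 + (x 0).im^2) + ((x 1).re^2 + (x 1).im^2) + ((x 2).re^2 + (x 2).im^2)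
            + ((x 3).re^2 + (x 3).im^2) + ((x 4).re^2 + (x 4).im^2) := by
        simp [Fin.sum_univ_five, Complex.normSq_apply, sq]
      rw [hre, hS]
      linarith [h1, h2]
    · simp
    · simp
      positivity
    · intro hcon
      have h4 := congrFun hcon 4
      simp only [Matrix.cons_val_four, Matrix.cons_val_zero, Matrix.cons_val_one,
        Matrix.head_cons, Matrix.tail_cons, Pi.zero_apply, Complex.ofReal_eq_zero] at h4
      nlinarith
    · -- hQv
      have hΔ : (μ^2-1)*(μ^2-1-b^2) - μ^2*c^2 = 0 := by linear_combination hμ4 - μ^2 * hbc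
      rw [hQA]
      have hSv : ∑ i, Complex.normSq
          ((fun i => ((![c*μ, b*(μ^2-1), c*μ^2, μ*(μ^2-1), μ^2-1] i : ℝ) : ℂ)) i)
          = (c*μ)^2 + (b*(μ^2-1))^2 + (c*μ^2)^2 + (μ*(μ^2-1))^2 + (μ^2-1)^2 := by
        simp [Fin.sum_univ_five, Complex.normSq_ofReal]
        ring
      rw [hSv]
      simp only [Matrix.cons_val_zero, Matrix.cons_val_one, Matrix.head_cons,
        Matrix.cons_val_two, Matrix.tail_cons, Matrix.cons_val_three, Matrix.cons_val_four,
        Complex.conj_ofReal]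
      have key : c*μ*(c*μ^2) + (b*(μ^2-1))*(b*(μ*(μ^2-1)) + (0*c)*(μ^2-1))
          + (c*μ^2)*(c*(μ*(μ^2-1)) + (-(0*b))*(μ^2-1)) + (μ*(μ^2-1))*(1*(μ^2-1))
          = 1/2*μ*((c*μ)^2 + (b*(μ^2-1))^2 + (c*μ^2)^2 + (μ*(μ^2-1))^2 + (μ^2-1)^2) := by
        linear_combination (-(μ*(μ^2-1))/2) * hΔ
      have keyC := congrArg (Complex.ofReal) key
      push_cast at keyC ⊢
      linear_combination keyC
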